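/- (W·X factorization of the inverse Vandermonde on consecutive nodes.) Let N ≥ 1, v ∈ ℝ, and let V be the N × N matrix with entries V_{p,k} = (v+k)^{p−1} (rows p = 1,…,N, columns k = 1,…,N). Define the N × N matrices W and X by W_{k,m} = (v+k)^{N−m} / λ(k) for 1 ≤ k, m ≤ N, where λ(k) = ∏_{j=1, j≠k}^{N}(k−j), and X lower triangular Toeplitz with X_{i,j} = (−1)^{i−j} · e_{i−j}({v+1, v+2, …, v+N}) for i ≥ j and X_{i,j} = 0 for i < j. Then V is invertible and V^{−1} = W·X. -/

import Mathlib

open Finset Matrix Polynomial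

lemma quot_coeff_aux (s : Multiset ℝ) (a : ℝ) (ha : a ∈ s) :
    ∀ d, d ≤ Multiset.card s - 1 →
      (((s.erase a).map fun t => Polynomial.X - Polynomial.C t).prod).coeff
          (Multiset.card s - 1 - d)
        = ∑ j ∈ Finset.range (d + 1), (-1 : ℝ) ^ j * s.esymm j * a ^ (d - j) := by
  set n := Multiset.card s with hn
  have hn1 : 1 ≤ n := by
    have := Multiset.card_pos_iff_exists_mem.mpr ⟨a, ha⟩; omega
  set Q : Polynomial ℝ := ((s.erase a).map fun t => Polynomial.X - Polynomial.C t).prod with hQ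
  have hcardQ : Multiset.card (s.erase a) = n - 1 := by
    rw [Multiset.card_erase_of_mem ha, Nat.pred_eq_sub_one, ← hn]
  have hQdeg : Q.natDegree = n - 1 := by
    rw [hQ, Polynomial.natDegree_multiset_prod_X_sub_C_eq_card, hcardQ]
  have hQmonic : Q.Monic := by
    exact Polynomial.monic_multiset_prod_of_monic _ _
      (fun t _ => Polynomial.monic_X_sub_C t)
  have hP : (s.map fun t => Polynomial.X - Polynomial.C t).prod
      = (Polynomial.X - Polynomial.C a) * Q := by
    conv_lhs => rw [← Multiset.cons_erase ha]
    rw [Multiset.map_cons, Multiset.prod_cons]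
  intro d
  induction d with
  | zero =>
    intro _
    have : Q.coeff (n - 1 - 0) = 1 := by
      simpa [hQdeg] using hQmonic.coeff_natDegree
    rw [this]
    simp [Multiset.esymm]
  | succ d ih =>
    intro hd
    have hd' : d ≤ n - 1 := le_of_lt (Nat.lt_of_lt_of_le (Nat.lt_succ_self d) hd)
    have hsK : n - 1 - d = (n - 1 - (d + 1)) + 1 := by omega
    have hPcoeff : ((s.map fun t => Polynomial.X - Polynomial.C t).prod).coeff (n - 1 - d)
        = (-1 : ℝ) ^ (d + 1) * s.esymm (d + 1) := by
      have h1 : n - 1 - d ≤ n := by omega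
      rw [Multiset.prod_X_sub_C_coeff s h1]
      congr 2 <;> omega
    have hkey : Q.coeff (n - 1 - (d + 1)) = (-1 : ℝ) ^ (d + 1) * s.esymm (d + 1)
        + a * Q.coeff (n - 1 - d) := by
      have := hPcoeff
      rw [hP] at this
      rw [sub_mul, Polynomial.coeff_sub, hsK, Polynomial.coeff_X_mul,
        Polynomial.coeff_C_mul] at this
      rw [← hsK] at this
      linarith [this]
    rw [hkey, ih hd']
    have hcg : ∀ j ∈ Finset.range (d + 1),
        (-1 : ℝ) ^ j * s.esymm j * a ^ (d + 1 - j)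
          = a * ((-1 : ℝ) ^ j * s.esymm j * a ^ (d - j)) := by
      intro j hj
      have hj' : j ≤ d := Nat.lt_succ_iff.mp (Finset.mem_range.mp hj)
      have : d + 1 - j = (d - j) + 1 := by omega
      rw [this, pow_succ]
      ring
    have hr : ∑ j ∈ Finset.range (d + 1 + 1), (-1 : ℝ) ^ j * s.esymm j * a ^ (d + 1 - j)
        = (-1 : ℝ) ^ (d + 1) * s.esymm (d + 1)
          + a * ∑ j ∈ Finset.range (d + 1), (-1 : ℝ) ^ j * s.esymm j * a ^ (d - j) := by
      rw [Finset.sum_range_succ, Finset.sum_congr rfl hcg, ← Finset.mul_sum]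
      simp [Nat.sub_self]
      ring
    rw [hr]

/-- `W·X` factorization of the inverse Vandermonde matrix on the consecutive
unit-spaced nodes `v+1,…,v+N`: `V⁻¹ = W·X` with `W_{k,m} = (v+k)^{N−m}/λ(k)` and
`X` the lower-triangular Toeplitz (Stanley) matrix of signed elementary symmetric
polynomials of the nodes. -/
theorem inverse_vandermonde_WX_factorization
    (N : ℕ) (hN : 1 ≤ N) (v : ℝ)
    (lam : ℕ → ℝ)
    (hlam : ∀ k, lam k = ∏ j ∈ (Finset.Icc 1 N).erase k, ((k : ℝ) - (j : ℝ)))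
    (V W X : Matrix (Fin N) (Fin N) ℝ)
    (hV : ∀ p k : Fin N, V p k = (v + ((k : ℕ) + 1 : ℕ)) ^ (p : ℕ))
    (hW : ∀ k m : Fin N, W k m = (v + ((k : ℕ) + 1 : ℕ)) ^ (N - ((m : ℕ) + 1)) /
      lam ((k : ℕ) + 1))
    (hX : ∀ i j : Fin N, X i j =
      if (j : ℕ) ≤ (i : ℕ) then
        (-1 : ℝ) ^ ((i : ℕ) - (j : ℕ)) *
          (((Finset.Icc 1 N).val.map (fun r : ℕ => v + (r : ℝ))).esymm ((i : ℕ) - (j : ℕ)))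
      else 0) :
    IsUnit V.det ∧ V⁻¹ = W * X := by
  set s : Multiset ℝ := (Finset.Icc 1 N).val.map (fun r : ℕ => v + (r : ℝ)) with hs
  have hcards : Multiset.card s = N := by simp [hs]
  set x : Fin N → ℝ := fun k => v + (((k : ℕ) + 1 : ℕ) : ℝ) with hx
  have hmem : ∀ k : Fin N, x k ∈ s := by
    intro k
    refine Multiset.mem_map.mpr ⟨(k : ℕ) + 1, ?_, rfl⟩
    rw [Finset.mem_val, Finset.mem_Icc]
    have := k.isLt; omega
  set Q : Fin N → Polynomial ℝ :=
    fun k => ((s.erase (x k)).map fun t => Polynomial.X - Polynomial.C t).prod with hQ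
  have hQdeg : ∀ k, (Q k).natDegree = N - 1 := by
    intro k
    rw [hQ, Polynomial.natDegree_multiset_prod_X_sub_C_eq_card,
      Multiset.card_erase_of_mem (hmem k), hcards, Nat.pred_eq_sub_one]
  have hinj : Function.Injective (fun r : ℕ => v + (r : ℝ)) := by
    intro a b hab
    simp only [add_right_inj, Nat.cast_inj] at hab
    exact hab
  have herase : ∀ k : Fin N, s.erase (x k)
      = (((Finset.Icc 1 N).erase ((k : ℕ) + 1)).val).map (fun r : ℕ => v + (r : ℝ)) := by
    intro k
    rw [Finset.erase_val, Multiset.map_erase _ hinj, hs]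
  have heval : ∀ (k : Fin N) (z : ℝ), (Q k).eval z
      = ∏ j ∈ (Finset.Icc 1 N).erase ((k : ℕ) + 1), (z - (v + (j : ℝ))) := by
    intro k z
    simp only [hQ]
    rw [herase k, Polynomial.eval_multiset_prod, Multiset.map_map, Multiset.map_map,
      Finset.prod_eq_multiset_prod]
    refine congrArg Multiset.prod (Multiset.map_congr rfl ?_)
    intro r _
    simp [Function.comp]
  have hlamne : ∀ k : Fin N, lam ((k : ℕ) + 1) ≠ 0 := by
    intro k
    rw [hlam]
    refine Finset.prod_ne_zero_iff.mpr ?_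
    intro j hj
    have hjne : j ≠ (k : ℕ) + 1 := (Finset.mem_erase.mp hj).1
    refine sub_ne_zero.mpr ?_
    intro h
    exact hjne (by exact_mod_cast h.symm)
  have hdiag : ∀ k : Fin N, (Q k).eval (x k) = lam ((k : ℕ) + 1) := by
    intro k
    rw [heval, hlam]
    refine Finset.prod_congr rfl ?_
    intro j _
    push_cast [hx]
    ring
  have hoff : ∀ k k' : Fin N, k ≠ k' → (Q k).eval (x k') = 0 := by
    intro k k' hkk'
    rw [heval]
    refine Finset.prod_eq_zero (i := (k' : ℕ) + 1) ?_ (by push_cast [hx]; ring)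
    rw [Finset.mem_erase, Finset.mem_Icc]
    have := k'.isLt
    have : (k' : ℕ) ≠ (k : ℕ) := fun h => hkk' (Fin.ext h.symm)
    constructor
    · omega
    · have := k'.isLt; omega
  have hWX : ∀ k p : Fin N, (W * X) k p = (Q k).coeff (p : ℕ) / lam ((k : ℕ) + 1) := by
    intro k p
    have hpN := p.isLt
    set d : ℕ := N - 1 - (p : ℕ) with hd
    have hpd : (p : ℕ) = N - 1 - d := by omega
    have hcoeff := quot_coeff_aux s (x k) (hmem k) d (by rw [hcards]; omega)
    rw [hcards] at hcoeff
    set g : ℕ → ℝ := fun m =>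
      (v + (((k : ℕ) + 1 : ℕ) : ℝ)) ^ (N - (m + 1)) / lam ((k : ℕ) + 1) *
        (if (p : ℕ) ≤ m then
          (-1 : ℝ) ^ (m - (p : ℕ)) * s.esymm (m - (p : ℕ)) else 0) with hg
    have h1 : (W * X) k p = ∑ m ∈ Finset.range N, g m := by
      rw [Matrix.mul_apply, ← Fin.sum_univ_eq_sum_range g N]
      refine Finset.sum_congr rfl ?_
      intro m _
      rw [hW, hX, hg]
    have h2 : ∑ m ∈ Finset.range N, g m
        = ∑ m ∈ Finset.Ico 0 (p : ℕ), g m + ∑ m ∈ Finset.Ico (p : ℕ) N, g m := by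
      rw [Finset.range_eq_Ico,
        ← Finset.sum_Ico_consecutive g (Nat.zero_le (p : ℕ)) (le_of_lt hpN)]
    have h3 : ∑ m ∈ Finset.Ico 0 (p : ℕ), g m = 0 := by
      refine Finset.sum_eq_zero ?_
      intro m hm
      have : m < (p : ℕ) := (Finset.mem_Ico.mp hm).2
      rw [hg]
      simp only [if_neg (by omega : ¬ (p : ℕ) ≤ m), mul_zero]
    have h4 : ∑ m ∈ Finset.Ico (p : ℕ) N, g m
        = (∑ j ∈ Finset.range (d + 1),
            (-1 : ℝ) ^ j * s.esymm j * (x k) ^ (d - j)) / lam ((k : ℕ) + 1) := by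
      rw [Finset.sum_Ico_eq_sum_range]
      have hNp : N - (p : ℕ) = d + 1 := by omega
      rw [hNp, Finset.sum_div]
      refine Finset.sum_congr rfl ?_
      intro j hj
      have hjd : j ≤ d := Nat.lt_succ_iff.mp (Finset.mem_range.mp hj)
      rw [hg]
      simp only [if_pos (Nat.le_add_right _ _), Nat.add_sub_cancel_left]
      have h5 : N - ((p : ℕ) + j + 1) = d - j := by omega
      rw [h5, hx]
      ring
    rw [h1, h2, h3, h4, zero_add, hpd, hcoeff]
  have hMV : (W * X) * V = 1 := by
    ext k k'
    rw [Matrix.mul_apply, Matrix.one_apply]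
    set g2 : ℕ → ℝ := fun p => (Q k).coeff p * (x k') ^ p with hg2
    have h1 : ∑ p : Fin N, (W * X) k p * V p k'
        = (∑ p ∈ Finset.range N, g2 p) / lam ((k : ℕ) + 1) := by
      rw [Finset.sum_div, ← Fin.sum_univ_eq_sum_range (fun p => g2 p / lam ((k : ℕ) + 1)) N]
      refine Finset.sum_congr rfl ?_
      intro p _
      rw [hWX, hV, hg2]
      simp only [hx]
      ring
    have h2 : ∑ p ∈ Finset.range N, g2 p = (Q k).eval (x k') := by
      rw [Polynomial.eval_eq_sum_range' (n := N) (by rw [hQdeg]; omega)]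
    rw [h1, h2]
    by_cases hkk' : k = k'
    · subst hkk'
      rw [if_pos rfl, hdiag, div_self (hlamne k)]
    · rw [if_neg hkk', hoff k k' hkk', zero_div]
  have hdet : IsUnit V.det := by
    refine IsUnit.of_mul_eq_one (a := V.det) ((W * X).det) ?_
    rw [mul_comm, ← Matrix.det_mul, hMV, Matrix.det_one]
  exact ⟨hdet, Matrix.inv_eq_left_inv hMV⟩
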